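/- Assume μ > 4, θ ∈ (θ_*(μ), θ^*(μ)) and 0 ≤ p < 4/(4+μ), and let x_d < x_m < x_u be the three fixed points of S. Then (S'(x_d) − 1)·(1 − p − p·S'(x_d)) < 0, (S'(x_m) − 1)·(1 − p − p·S'(x_m)) > 0, and (S'(x_u) − 1)·(1 − p − p·S'(x_u)) < 0; that is, the maximal real part of the linear dispersion relation is negative at the down state x_d and the up state x_u (linear stability) and positive at the middle state x_m (linear instability). -/

import Mathlib

/-- The sigmoid nonlinearity `S(x) = 1/(1 + exp(-μ(x - θ)))`. -/
noncomputable def sigmoid (μ θ x : ℝ) : ℝ := 1 / (1 + Real.exp (-μ * (x - θ)))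

/-- The function `f(x) = x + (1/μ)·ln((1−x)/x)`. -/
noncomputable def fmu (μ x : ℝ) : ℝ := x + (1 / μ) * Real.log ((1 - x) / x)

/-- `θ_*(μ) = f(x_*(μ))` with `x_*(μ) = 1/2 − √(1/4 − 1/μ)`. -/
noncomputable def thetalow (μ : ℝ) : ℝ := fmu μ (1 / 2 - Real.sqrt (1 / 4 - 1 / μ))

/-- `θ^*(μ) = f(x^*(μ))` with `x^*(μ) = 1/2 + √(1/4 − 1/μ)`. -/
noncomputable def thetahigh (μ : ℝ) : ℝ := fmu μ (1 / 2 + Real.sqrt (1 / 4 - 1 / μ))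

lemma sigmoid_deriv (μ θ x : ℝ) : deriv (sigmoid μ θ) x =
    μ * Real.exp (-μ * (x - θ)) / (1 + Real.exp (-μ * (x - θ)))^2 := by
  have he : 0 < Real.exp (-μ * (x - θ)) := Real.exp_pos _
  have hne : (1 : ℝ) + Real.exp (-μ * (x - θ)) ≠ 0 := by positivity
  have h1 : HasDerivAt (fun x : ℝ => -μ * (x - θ)) (-μ) x := by
    simpa using ((hasDerivAt_id x).sub_const θ).const_mul (-μ)
  have h2 : HasDerivAt (fun x : ℝ => 1 + Real.exp (-μ * (x - θ)))
      (Real.exp (-μ * (x - θ)) * (-μ)) x := (h1.exp).const_add 1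
  have h3 := (h2.inv hne)
  have h4 : HasDerivAt (fun y : ℝ => 1 / (1 + Real.exp (-μ * (y - θ))))
      (-(Real.exp (-μ * (x - θ)) * (-μ)) / (1 + Real.exp (-μ * (x - θ)))^2) x := by
    rw [show (fun y : ℝ => 1 / (1 + Real.exp (-μ * (y - θ)))) = fun y => (1 + Real.exp (-μ * (y - θ)))⁻¹ from by funext y; rw [one_div]]; exact h3
  have h5 : HasDerivAt (sigmoid μ θ)
      (-(Real.exp (-μ * (x - θ)) * (-μ)) / (1 + Real.exp (-μ * (x - θ)))^2) x := h4
  rw [h5.deriv]; ring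

lemma fixed_mem {μ θ x : ℝ} (hx : sigmoid μ θ x = x) : 0 < x ∧ x < 1 := by
  have he : 0 < Real.exp (-μ * (x - θ)) := Real.exp_pos _
  constructor
  · rw [← hx]; unfold sigmoid; positivity
  · rw [← hx]; unfold sigmoid
    rw [div_lt_one (by positivity)]; linarith

lemma deriv_at_fixed {μ θ x : ℝ} (hx : sigmoid μ θ x = x) :
    deriv (sigmoid μ θ) x = μ * x * (1 - x) := by
  have he : 0 < Real.exp (-μ * (x - θ)) := Real.exp_pos _
  have h0 : 0 < x := (fixed_mem hx).1
  rw [sigmoid_deriv]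
  unfold sigmoid at hx
  have hne : (1 : ℝ) + Real.exp (-μ * (x - θ)) ≠ 0 := by positivity
  have hE : Real.exp (-μ * (x - θ)) = (1 - x) / x := by
    field_simp at hx ⊢
    nlinarith [hx]
  rw [hE]
  field_simp
  ring

lemma fmu_fixed {μ θ x : ℝ} (hμ : 0 < μ) (h0 : 0 < x) (h1 : x < 1)
    (hf : fmu μ x = θ) : sigmoid μ θ x = x := by
  unfold fmu at hf
  have hq : 0 < (1 - x) / x := div_pos (by linarith) h0
  have hexp : Real.exp (-μ * (x - θ)) = (1 - x) / x := by
    have : -μ * (x - θ) = Real.log ((1 - x) / x) := by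
      rw [← hf]; field_simp; ring
    rw [this, Real.exp_log hq]
  unfold sigmoid
  rw [hexp]
  rw [div_eq_iff (by positivity)]
  field_simp; ring

lemma fmu_contOn {μ a b : ℝ} (ha : 0 < a) (hb : b < 1) :
    ContinuousOn (fmu μ) (Set.Icc a b) := by
  apply ContinuousOn.add continuousOn_id
  apply ContinuousOn.mul continuousOn_const
  apply ContinuousOn.log
  · exact ContinuousOn.div (by fun_prop) (by fun_prop)
      (fun x hx => ne_of_gt (lt_of_lt_of_le ha hx.1))
  · intro x hx
    exact ne_of_gt (div_pos (by linarith [hx.2]) (lt_of_lt_of_le ha hx.1))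

-- fmu at the point 1/(1+exp c)
lemma fmu_low (μ c : ℝ) (hμ : 0 < μ) :
    fmu μ (1 / (1 + Real.exp c)) = 1 / (1 + Real.exp c) + c / μ := by
  have hE : 0 < Real.exp c := Real.exp_pos c
  have h1E : (0:ℝ) < 1 + Real.exp c := by linarith
  have hration : (1 - 1 / (1 + Real.exp c)) / (1 / (1 + Real.exp c)) = Real.exp c := by
    field_simp; ring
  unfold fmu
  rw [hration, Real.log_exp]
  ring

-- fmu at the point 1 - 1/(1+exp c)
lemma fmu_high (μ c : ℝ) (hμ : 0 < μ) :
    fmu μ (1 - 1 / (1 + Real.exp c)) = 1 - 1 / (1 + Real.exp c) - c / μ := by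
  have hE : 0 < Real.exp c := Real.exp_pos c
  have h1E : (0:ℝ) < 1 + Real.exp c := by linarith
  have hration : (1 - (1 - 1 / (1 + Real.exp c))) / (1 - 1 / (1 + Real.exp c))
      = Real.exp (-c) := by
    rw [Real.exp_neg]
    field_simp; ring
  unfold fmu
  rw [hration, Real.log_exp]
  ring

set_option maxHeartbeats 1000000 in
lemma exists_three {μ θ : ℝ} (hμ : 4 < μ) (hθl : thetalow μ < θ) (hθh : θ < thetahigh μ) :
    ∃ y1 y2 y3 : ℝ,
      (0 < y1 ∧ y1 < 1/2 - Real.sqrt (1/4 - 1/μ)) ∧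
      (1/2 - Real.sqrt (1/4 - 1/μ) < y2 ∧ y2 < 1/2 + Real.sqrt (1/4 - 1/μ)) ∧
      (1/2 + Real.sqrt (1/4 - 1/μ) < y3 ∧ y3 < 1) ∧
      sigmoid μ θ y1 = y1 ∧ sigmoid μ θ y2 = y2 ∧ sigmoid μ θ y3 = y3 := by
  have hμ0 : (0:ℝ) < μ := by linarith
  have harg : (0:ℝ) < 1/4 - 1/μ := by
    have : (1:ℝ)/μ < 1/4 := by rw [div_lt_div_iff₀ hμ0 (by norm_num)]; linarith
    linarith
  set s := Real.sqrt (1/4 - 1/μ) with hsdef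
  have hs2 : s^2 = 1/4 - 1/μ := Real.sq_sqrt harg.le
  have hs0 : 0 < s := Real.sqrt_pos.mpr harg
  have hμinv : (0:ℝ) < 1/μ := by positivity
  have hshalf : s < 1/2 := by nlinarith [hs2, hμinv, hs0]
  have hxlo0 : (0:ℝ) < 1/2 - s := by linarith
  have hxhi1 : (1:ℝ)/2 + s < 1 := by linarith
  have hlowd : thetalow μ = fmu μ (1/2 - s) := by rw [thetalow]
  have hhighd : thetahigh μ = fmu μ (1/2 + s) := by rw [thetahigh]
  have hkey : (1/2 - s) * (1/(1/2 - s)) = 1 := by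
    field_simp
    exact div_self (ne_of_gt (by linarith))
  -- lower point
  set c : ℝ := max (μ*θ) (Real.log (1/(1/2 - s))) with hcdef
  have hE : 0 < Real.exp c := Real.exp_pos c
  have hEc : 1/(1/2 - s) ≤ Real.exp c := by
    calc 1/(1/2 - s) = Real.exp (Real.log (1/(1/2 - s))) := by
          rw [Real.exp_log (by positivity)]
      _ ≤ Real.exp c := Real.exp_le_exp.mpr (le_max_right _ _)
  set a : ℝ := 1/(1 + Real.exp c) with hadef
  have ha0 : 0 < a := by positivity
  have halt : a < 1/2 - s := by
    rw [hadef, div_lt_iff₀ (by positivity)]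
    nlinarith [hkey, mul_le_mul_of_nonneg_left hEc hxlo0.le]
  have hfa_gt : θ < fmu μ a := by
    rw [hadef, fmu_low μ c hμ0]
    have : θ ≤ c/μ := by
      rw [le_div_iff₀ hμ0]
      calc θ * μ = μ * θ := by ring
        _ ≤ c := le_max_left _ _
    have ha0' : 0 < 1/(1 + Real.exp c) := by positivity
    linarith
  obtain ⟨y1, hy1mem, hy1⟩ := intermediate_value_Ioo' halt.le
    (fmu_contOn ha0 (by linarith)) (Set.mem_Ioo.mpr ⟨by rw [← hlowd]; exact hθl, hfa_gt⟩)
  -- middle point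
  obtain ⟨y2, hy2mem, hy2⟩ := intermediate_value_Ioo (by linarith : 1/2 - s ≤ 1/2 + s)
    (fmu_contOn hxlo0 hxhi1)
    (Set.mem_Ioo.mpr ⟨by rw [← hlowd]; exact hθl, by rw [← hhighd]; exact hθh⟩)
  -- upper point
  set c' : ℝ := max (μ*(1-θ)) (Real.log (1/(1/2 - s))) with hc'def
  have hE' : 0 < Real.exp c' := Real.exp_pos c'
  have hEc' : 1/(1/2 - s) ≤ Real.exp c' := by
    calc 1/(1/2 - s) = Real.exp (Real.log (1/(1/2 - s))) := by
          rw [Real.exp_log (by positivity)]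
      _ ≤ Real.exp c' := Real.exp_le_exp.mpr (le_max_right _ _)
  set b : ℝ := 1 - 1/(1 + Real.exp c') with hbdef
  have hb1 : b < 1 := by
    rw [hbdef]; have : 0 < 1/(1 + Real.exp c') := by positivity
    linarith
  have hbgt : 1/2 + s < b := by
    rw [hbdef]
    have : 1/(1 + Real.exp c') < 1/2 - s := by
      rw [div_lt_iff₀ (by positivity)]
      nlinarith [hkey, mul_le_mul_of_nonneg_left hEc' hxlo0.le]
    linarith
  have hfb_lt : fmu μ b < θ := by
    rw [hbdef, fmu_high μ c' hμ0]
    have h1 : 1 - θ ≤ c'/μ := by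
      rw [le_div_iff₀ hμ0]
      calc (1 - θ) * μ = μ * (1 - θ) := by ring
        _ ≤ c' := le_max_left _ _
    have : 0 < 1/(1 + Real.exp c') := by positivity
    linarith
  obtain ⟨y3, hy3mem, hy3⟩ := intermediate_value_Ioo' hbgt.le
    (fmu_contOn (by linarith) hb1)
    (Set.mem_Ioo.mpr ⟨hfb_lt, by rw [← hhighd]; exact hθh⟩)
  clear_value s c a c' b
  obtain ⟨hy1a, hy1b⟩ := hy1mem
  obtain ⟨hy2a, hy2b⟩ := hy2mem
  obtain ⟨hy3a, hy3b⟩ := hy3mem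
  refine ⟨y1, y2, y3, ⟨by linarith, hy1b⟩, ⟨hy2a, hy2b⟩,
    ⟨hy3a, by linarith⟩, ?_, ?_, ?_⟩
  · exact fmu_fixed hμ0 (by linarith) (by linarith) hy1
  · exact fmu_fixed hμ0 (by linarith) (by linarith) hy2
  · exact fmu_fixed hμ0 (by linarith) (by linarith) hy3


set_option maxHeartbeats 2000000 in
/-- Assume `μ > 4`, `θ ∈ (θ_*(μ), θ^*(μ))`, `0 ≤ p < 4/(4+μ)`, and let
`x_d < x_m < x_u` be the three fixed points of `S`. Then
`(S'(x_d) − 1)·(1 − p − p·S'(x_d)) < 0`, `(S'(x_m) − 1)·(1 − p − p·S'(x_m)) > 0` and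
`(S'(x_u) − 1)·(1 − p − p·S'(x_u)) < 0`: the down and up states are linearly stable
while the middle state is linearly unstable. -/
theorem stmt_15 (μ θ p : ℝ) (hμ : 4 < μ)
    (hθ : θ ∈ Set.Ioo (thetalow μ) (thetahigh μ))
    (hp0 : 0 ≤ p) (hp : p < 4 / (4 + μ))
    (xd xm xu : ℝ) (hdm : xd < xm) (hmu : xm < xu)
    (hxd : sigmoid μ θ xd = xd) (hxm : sigmoid μ θ xm = xm) (hxu : sigmoid μ θ xu = xu)
    (hall : ∀ x : ℝ, sigmoid μ θ x = x → x = xd ∨ x = xm ∨ x = xu) :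
    (deriv (sigmoid μ θ) xd - 1) * (1 - p - p * deriv (sigmoid μ θ) xd) < 0 ∧
    0 < (deriv (sigmoid μ θ) xm - 1) * (1 - p - p * deriv (sigmoid μ θ) xm) ∧
    (deriv (sigmoid μ θ) xu - 1) * (1 - p - p * deriv (sigmoid μ θ) xu) < 0 := by
  obtain ⟨hθl, hθh⟩ := hθ
  obtain ⟨y1, y2, y3, ⟨hy10, hy1lo⟩, ⟨hy2lo, hy2hi⟩, ⟨hy3hi, hy31⟩, hf1, hf2, hf3⟩ :=
    exists_three hμ hθl hθh
  have hμ0 : (0:ℝ) < μ := by linarith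
  have harg : (0:ℝ) < 1/4 - 1/μ := by
    have : (1:ℝ)/μ < 1/4 := by rw [div_lt_div_iff₀ hμ0 (by norm_num)]; linarith
    linarith
  set s := Real.sqrt (1/4 - 1/μ) with hsdef
  have hs2 : s^2 = 1/4 - 1/μ := Real.sq_sqrt harg.le
  have hs0 : 0 < s := Real.sqrt_pos.mpr harg
  have hs2' : μ * s^2 = μ/4 - 1 := by rw [hs2]; field_simp
  have ho12 : y1 < y2 := by linarith
  have ho23 : y2 < y3 := by linarith
  obtain ⟨hxdlt, hxmlo, hxmhi, hxugt⟩ :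
      xd < 1/2 - s ∧ 1/2 - s < xm ∧ xm < 1/2 + s ∧ 1/2 + s < xu := by
    rcases hall y1 hf1 with rfl|rfl|rfl <;> rcases hall y2 hf2 with rfl|rfl|rfl <;>
      rcases hall y3 hf3 with rfl|rfl|rfl <;>
      exact ⟨by linarith, by linarith, by linarith, by linarith⟩
  have hDd := deriv_at_fixed hxd
  have hDm := deriv_at_fixed hxm
  have hDu := deriv_at_fixed hxu
  have hp' : p * (4 + μ) < 4 := by
    rw [lt_div_iff₀ (by linarith)] at hp; linarith
  have hfac : ∀ x : ℝ, 0 < 1 - p - p * (μ * x * (1 - x)) := by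
    intro x
    have hDle : μ * x * (1 - x) ≤ μ/4 := by nlinarith [sq_nonneg (2*x - 1), hμ0]
    have h2 : p * (μ * x * (1 - x)) ≤ p * (μ/4) := mul_le_mul_of_nonneg_left hDle hp0
    nlinarith [h2, hp']
  have hd1 : μ * xd * (1 - xd) < 1 := by
    nlinarith [mul_pos (mul_pos hμ0 (show (0:ℝ) < 1/2 - s - xd by linarith))
      (show (0:ℝ) < 1/2 + s - xd by linarith), hs2']
  have hm1 : 1 < μ * xm * (1 - xm) := by
    nlinarith [mul_pos (mul_pos hμ0 (show (0:ℝ) < xm - (1/2 - s) by linarith))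
      (show (0:ℝ) < 1/2 + s - xm by linarith), hs2']
  have hu1 : μ * xu * (1 - xu) < 1 := by
    nlinarith [mul_pos (mul_pos hμ0 (show (0:ℝ) < xu - (1/2 + s) by linarith))
      (show (0:ℝ) < xu - (1/2 - s) by linarith), hs2']
  rw [hDd, hDm, hDu]
  exact ⟨mul_neg_of_neg_of_pos (by linarith) (hfac xd),
    mul_pos (by linarith) (hfac xm),
    mul_neg_of_neg_of_pos (by linarith) (hfac xu)⟩
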